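/- Let s ∈ ℝ^N have nonnegative entries, let ε > 0 and δ ∈ (0,1), let w ≥ e/ε and d ≥ ln(N/δ), and let H_1, …, H_d : Ω → (Fin N → Fin w) be mutually independent random hash functions on a probability space (Ω, P) such that for each i and every pair j ≠ j', P(H_i(j') = H_i(j)) ≤ 1/w. Define the Count-Min Sketch CMS(i, c) = Σ_{j' : H_i(j') = c} s_{j'} and recovery ŝ_j = min_{1 ≤ i ≤ d} CMS(i, H_i(j)). Then with probability at least 1 − δ, simultaneously for every coordinate j: s_j ≤ ŝ_j ≤ s_j + ε |s|₁. -/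

import Mathlib

open MeasureTheory ProbabilityTheory
open scoped ENNReal

lemma cms_markov_row {Ω : Type*} [MeasurableSpace Ω] (P : Measure Ω) [IsProbabilityMeasure P]
    (N w : ℕ) (s : Fin N → ℝ) (hs : ∀ j, 0 ≤ s j)
    (ε : ℝ) (hε : 0 < ε) (hw : Real.exp 1 / ε ≤ (w : ℝ))
    (g : Ω → Fin N → Fin w) (hg : Measurable g) (j : Fin N)
    (hcol : ∀ j' : Fin N, j' ≠ j → P {ω | g ω j' = g ω j} ≤ ((w : ℝ≥0∞))⁻¹) :
    P {ω | ε * ∑ j', s j' <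
        ∑ j' ∈ (Finset.univ.erase j).filter (fun j' => g ω j' = g ω j), s j'}
      ≤ ENNReal.ofReal (Real.exp (-1)) := by
  set T := ∑ j', s j' with hT
  have hT0 : 0 ≤ T := Finset.sum_nonneg fun j' _ => hs j'
  have hexle : ∀ ω, ∑ j' ∈ (Finset.univ.erase j).filter (fun j' => g ω j' = g ω j), s j' ≤ T := by
    intro ω
    exact Finset.sum_le_sum_of_subset_of_nonneg (by intro x hx; exact Finset.mem_univ x)
      (fun x _ _ => hs x)
  rcases eq_or_lt_of_le hT0 with hT0' | hTpos
  · have : {ω | ε * T <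
        ∑ j' ∈ (Finset.univ.erase j).filter (fun j' => g ω j' = g ω j), s j'} = ∅ := by
      ext ω
      simp only [Set.mem_setOf_eq, Set.mem_empty_iff_false, iff_false, not_lt]
      calc ∑ j' ∈ (Finset.univ.erase j).filter (fun j' => g ω j' = g ω j), s j' ≤ T := hexle ω
        _ = ε * T := by rw [← hT0']; ring
    rw [this]
    simp
  -- main case
  have hwpos : (0:ℝ) < w := lt_of_lt_of_le (by positivity) hw
  set f : Ω → ℝ≥0∞ := fun ω => ∑ j' ∈ Finset.univ.erase j,
      Set.indicator {ω | g ω j' = g ω j} (fun _ => ENNReal.ofReal (s j')) ω with hf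
  have hSm : ∀ j' : Fin N, MeasurableSet {ω | g ω j' = g ω j} := by
    intro j'
    have : {ω | g ω j' = g ω j} = g ⁻¹' {h | h j' = h j} := rfl
    rw [this]
    exact hg ((Set.to_countable _).measurableSet)
  have hfm : Measurable f := by
    apply Finset.measurable_sum
    intro j' _
    exact (measurable_const).indicator (hSm j')
  have hfval : ∀ ω, f ω = ENNReal.ofReal
      (∑ j' ∈ (Finset.univ.erase j).filter (fun j' => g ω j' = g ω j), s j') := by
    intro ω
    rw [Finset.sum_filter, ENNReal.ofReal_sum_of_nonneg (fun j' _ => by split_ifs; exacts [hs j', le_rfl])]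
    refine Finset.sum_congr rfl fun j' _ => ?_
    by_cases h : g ω j' = g ω j
    · simp [Set.indicator_of_mem, h, Set.mem_setOf_eq]
    · simp [Set.indicator_of_notMem, h, Set.mem_setOf_eq]
  have hsub : {ω | ε * T <
        ∑ j' ∈ (Finset.univ.erase j).filter (fun j' => g ω j' = g ω j), s j'}
      ⊆ {ω | ENNReal.ofReal (ε * T) ≤ f ω} := by
    intro ω hω
    rw [Set.mem_setOf_eq, hfval ω]
    exact ENNReal.ofReal_le_ofReal (le_of_lt hω)
  have hlint : ∫⁻ ω, f ω ∂P ≤ ENNReal.ofReal T * ((w : ℝ≥0∞))⁻¹ := by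
    rw [hf]
    rw [lintegral_finset_sum _ (fun j' _ => (measurable_const).indicator (hSm j'))]
    calc ∑ j' ∈ Finset.univ.erase j, ∫⁻ ω, Set.indicator {ω | g ω j' = g ω j}
            (fun _ => ENNReal.ofReal (s j')) ω ∂P
        = ∑ j' ∈ Finset.univ.erase j, ENNReal.ofReal (s j') * P {ω | g ω j' = g ω j} := by
          refine Finset.sum_congr rfl fun j' _ => ?_
          rw [lintegral_indicator_const (hSm j')]
      _ ≤ ∑ j' ∈ Finset.univ.erase j, ENNReal.ofReal (s j') * ((w : ℝ≥0∞))⁻¹ := by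
          refine Finset.sum_le_sum fun j' hj' => ?_
          exact mul_le_mul_right (hcol j' (Finset.ne_of_mem_erase hj')) _
      _ = (∑ j' ∈ Finset.univ.erase j, ENNReal.ofReal (s j')) * ((w : ℝ≥0∞))⁻¹ := by
          rw [Finset.sum_mul]
      _ ≤ ENNReal.ofReal T * ((w : ℝ≥0∞))⁻¹ := by
          apply mul_le_mul_left
          rw [← ENNReal.ofReal_sum_of_nonneg (fun j' _ => hs j')]
          apply ENNReal.ofReal_le_ofReal
          exact Finset.sum_le_sum_of_subset_of_nonneg
            (fun x hx => Finset.mem_univ x) (fun x _ _ => hs x)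
  have hmarkov := mul_meas_ge_le_lintegral₀ (μ := P) hfm.aemeasurable (ENNReal.ofReal (ε * T))
  have hεT : 0 < ε * T := by positivity
  have ha0 : ENNReal.ofReal (ε * T) ≠ 0 := by
    simp [ENNReal.ofReal_pos.mpr hεT, ne_of_gt]
  have hatop : ENNReal.ofReal (ε * T) ≠ ⊤ := ENNReal.ofReal_ne_top
  calc P {ω | ε * T <
        ∑ j' ∈ (Finset.univ.erase j).filter (fun j' => g ω j' = g ω j), s j'}
      ≤ P {ω | ENNReal.ofReal (ε * T) ≤ f ω} := measure_mono hsub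
    _ = (ENNReal.ofReal (ε * T))⁻¹ * (ENNReal.ofReal (ε * T) *
          P {ω | ENNReal.ofReal (ε * T) ≤ f ω}) := by
        rw [← mul_assoc, ENNReal.inv_mul_cancel ha0 hatop, one_mul]
    _ ≤ (ENNReal.ofReal (ε * T))⁻¹ * (ENNReal.ofReal T * ((w : ℝ≥0∞))⁻¹) :=
        mul_le_mul_right (le_trans hmarkov hlint) _
    _ ≤ ENNReal.ofReal (Real.exp (-1)) := by
        rw [← ENNReal.ofReal_inv_of_pos hεT,
          show ((w : ℝ≥0∞)) = ENNReal.ofReal (w : ℝ) by simp,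
          ← ENNReal.ofReal_inv_of_pos hwpos,
          ← ENNReal.ofReal_mul (by positivity), ← ENNReal.ofReal_mul (by positivity)]
        apply ENNReal.ofReal_le_ofReal
        have h1 : (ε * T)⁻¹ * (T * (w : ℝ)⁻¹) = (ε * (w:ℝ))⁻¹ := by
          field_simp
        rw [h1, Real.exp_neg]
        apply inv_anti₀ (Real.exp_pos 1)
        rw [div_le_iff₀ hε] at hw
        linarith [hw]

/-- Count-Min Sketch guarantee: with `w ≥ e/ε` columns and `d ≥ ln(N/δ)` mutually
independent universal hash rows, with probability at least `1 - δ`, simultaneously for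
every coordinate `j`, the recovered value `ŝ_j = min_i CMS(i, H_i j)` satisfies
`s_j ≤ ŝ_j ≤ s_j + ε |s|₁`. -/
theorem count_min_sketch_guarantee {Ω : Type*} [MeasurableSpace Ω]
    (P : Measure Ω) [IsProbabilityMeasure P]
    (N w d : ℕ) (hN : 1 ≤ N) (hd : 1 ≤ d)
    (s : Fin N → ℝ) (hs : ∀ j, 0 ≤ s j)
    (ε δ : ℝ) (hε : 0 < ε) (hδ0 : 0 < δ) (hδ1 : δ < 1)
    (hw : Real.exp 1 / ε ≤ (w : ℝ)) (hdlog : Real.log ((N : ℝ) / δ) ≤ (d : ℝ))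
    (H : Fin d → Ω → Fin N → Fin w)
    (hHm : ∀ i, Measurable (H i))
    (hindep : iIndepFun H P)
    (hcol : ∀ (i : Fin d) (j j' : Fin N), j' ≠ j →
        P {ω | H i ω j' = H i ω j} ≤ ((w : ℝ≥0∞))⁻¹) :
    ENNReal.ofReal (1 - δ) ≤
      P {ω | ∀ j : Fin N,
        s j ≤ (⨅ i : Fin d,
            ∑ j' ∈ Finset.univ.filter (fun j' => H i ω j' = H i ω j), s j') ∧
        (⨅ i : Fin d,
            ∑ j' ∈ Finset.univ.filter (fun j' => H i ω j' = H i ω j), s j')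
          ≤ s j + ε * ∑ j', s j'} := by

  have hne : Nonempty (Fin d) := ⟨⟨0, hd⟩⟩
  set T := ∑ j', s j' with hT
  have hT0 : 0 ≤ T := Finset.sum_nonneg fun j' _ => hs j'
  set A : Fin N → Fin d → Set Ω := fun j i =>
    {ω | ε * T < ∑ j' ∈ (Finset.univ.erase j).filter (fun j' => H i ω j' = H i ω j), s j'}
    with hA
  set G : Set Ω := {ω | ∀ j : Fin N,
        s j ≤ (⨅ i : Fin d,
            ∑ j' ∈ Finset.univ.filter (fun j' => H i ω j' = H i ω j), s j') ∧
        (⨅ i : Fin d,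
            ∑ j' ∈ Finset.univ.filter (fun j' => H i ω j' = H i ω j), s j')
          ≤ s j + ε * T} with hG
  have hsplit : ∀ (i : Fin d) (ω : Ω) (j : Fin N),
      ∑ j' ∈ Finset.univ.filter (fun j' => H i ω j' = H i ω j), s j'
        = s j + ∑ j' ∈ (Finset.univ.erase j).filter (fun j' => H i ω j' = H i ω j), s j' := by
    intro i ω j
    have hmem : j ∈ Finset.univ.filter (fun j' => H i ω j' = H i ω j) := by simp
    rw [Finset.filter_erase, ← Finset.add_sum_erase _ _ hmem]
  have hexnn : ∀ (i : Fin d) (ω : Ω) (j : Fin N),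
      0 ≤ ∑ j' ∈ (Finset.univ.erase j).filter (fun j' => H i ω j' = H i ω j), s j' :=
    fun i ω j => Finset.sum_nonneg fun j' _ => hs j'
  have hlow : ∀ (ω : Ω) (j : Fin N), s j ≤ ⨅ i : Fin d,
      ∑ j' ∈ Finset.univ.filter (fun j' => H i ω j' = H i ω j), s j' := by
    intro ω j
    refine le_ciInf fun i => ?_
    rw [hsplit i ω j]
    linarith [hexnn i ω j]
  have hcompl : Gᶜ ⊆ ⋃ j, ⋂ i, A j i := by
    intro ω hω
    simp only [hG, Set.mem_compl_iff, Set.mem_setOf_eq, not_forall] at hω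
    obtain ⟨j, hj⟩ := hω
    have hup : ¬ ((⨅ i : Fin d,
        ∑ j' ∈ Finset.univ.filter (fun j' => H i ω j' = H i ω j), s j') ≤ s j + ε * T) :=
      fun h => hj ⟨hlow ω j, h⟩
    push_neg at hup
    refine Set.mem_iUnion.mpr ⟨j, Set.mem_iInter.mpr fun i => ?_⟩
    have hle : (⨅ i : Fin d,
        ∑ j' ∈ Finset.univ.filter (fun j' => H i ω j' = H i ω j), s j')
        ≤ ∑ j' ∈ Finset.univ.filter (fun j' => H i ω j' = H i ω j), s j' :=
      ciInf_le (Set.finite_range _).bddBelow i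
    have := lt_of_lt_of_le hup hle
    rw [hsplit i ω j] at this
    show ε * T < _
    linarith
  have hBj : ∀ j : Fin N, P (⋂ i, A j i) ≤ ENNReal.ofReal (δ / N) := by
    intro j
    have hmeas : ∀ i : Fin d, MeasurableSet[
        (inferInstance : MeasurableSpace (Fin N → Fin w)).comap (H i)] (A j i) := by
      intro i
      exact ⟨{h | ε * T < ∑ j' ∈ (Finset.univ.erase j).filter (fun j' => h j' = h j), s j'},
        (Set.to_countable _).measurableSet, rfl⟩
    rw [hindep.meas_iInter hmeas]
    have hrow : ∀ i : Fin d, P (A j i) ≤ ENNReal.ofReal (Real.exp (-1)) := by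
      intro i
      exact cms_markov_row P N w s hs ε hε hw (H i) (hHm i) j
        (fun j' hj' => hcol i j j' hj')
    calc ∏ i : Fin d, P (A j i) ≤ ∏ _i : Fin d, ENNReal.ofReal (Real.exp (-1)) :=
          Finset.prod_le_prod' fun i _ => hrow i
      _ = ENNReal.ofReal (Real.exp (-1)) ^ d := by simp
      _ = ENNReal.ofReal (Real.exp (-1) ^ d) := (ENNReal.ofReal_pow (Real.exp_pos _).le d).symm
      _ = ENNReal.ofReal (Real.exp (-(d : ℝ))) := by
          rw [← Real.exp_nat_mul]
          norm_num
      _ ≤ ENNReal.ofReal (δ / N) := by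
          apply ENNReal.ofReal_le_ofReal
          have hNδ : (0:ℝ) < (N : ℝ) / δ := by positivity
          have h1 : (N : ℝ) / δ ≤ Real.exp d := by
            rw [← Real.exp_log hNδ]
            exact Real.exp_le_exp.mpr hdlog
          have h2 : (Real.exp (d:ℝ))⁻¹ ≤ ((N : ℝ) / δ)⁻¹ := inv_anti₀ hNδ h1
          rw [Real.exp_neg]
          rw [inv_div] at h2
          exact h2
  have hbad : P (⋃ j, ⋂ i, A j i) ≤ ENNReal.ofReal δ := by
    calc P (⋃ j, ⋂ i, A j i) ≤ ∑' j : Fin N, P (⋂ i, A j i) := measure_iUnion_le _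
      _ = ∑ j : Fin N, P (⋂ i, A j i) := tsum_fintype _
      _ ≤ ∑ _j : Fin N, ENNReal.ofReal (δ / N) := Finset.sum_le_sum fun j _ => hBj j
      _ = (N : ℝ≥0∞) * ENNReal.ofReal (δ / N) := by
          simp [Finset.sum_const, mul_comm]
      _ = ENNReal.ofReal ((N : ℝ) * (δ / N)) := by
          rw [ENNReal.ofReal_mul (by positivity)]
          simp
      _ = ENNReal.ofReal δ := by
          congr 1
          field_simp
  have hcover : (1 : ℝ≥0∞) ≤ P G + P (⋃ j, ⋂ i, A j i) := by
    have hsub : (Set.univ : Set Ω) ⊆ G ∪ ⋃ j, ⋂ i, A j i := by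
      intro ω _
      by_cases h : ω ∈ G
      · exact Or.inl h
      · exact Or.inr (hcompl h)
    calc (1 : ℝ≥0∞) = P Set.univ := (measure_univ).symm
      _ ≤ P (G ∪ ⋃ j, ⋂ i, A j i) := measure_mono hsub
      _ ≤ P G + P (⋃ j, ⋂ i, A j i) := measure_union_le _ _
  have : ENNReal.ofReal (1 - δ) = 1 - ENNReal.ofReal δ := by
    rw [ENNReal.ofReal_sub _ hδ0.le, ENNReal.ofReal_one]
  rw [this, tsub_le_iff_right]
  calc (1 : ℝ≥0∞) ≤ P G + P (⋃ j, ⋂ i, A j i) := hcover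
    _ ≤ P G + ENNReal.ofReal δ := add_le_add_right hbad _
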